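/- Let P ⊆ ℝ^d be a finite set and suppose there exist m pairwise disjoint subsets S_1, ..., S_m ⊆ P, each of size at least α, each contained in a ball of radius at most 8r centered at a point c_i, such that for each i the number of indices j with ‖c_i - c_j‖ ≤ (8 + 2σ)·8r is at most D (including i itself). Then one can select at least m/D indices I such that for all distinct i, j ∈ I, dist(S_i, S_j) ≥ ‖c_i - c_j‖ - 16r ≥ 2σ·8r ≥ σ·max(diam S_i, diam S_j); i.e., {S_i}_{i∈I} is strongly σ-separated. -/

import Mathlib

lemma greedy_select {m D : ℕ} (near : Fin m → Fin m → Prop) [DecidableRel near]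
    (hsym : ∀ i j, near i j → near j i) (hrefl : ∀ i, near i i)
    (hD : ∀ i, (Finset.univ.filter (fun j => near i j)).card ≤ D) :
    ∀ A : Finset (Fin m), ∃ I : Finset (Fin m), I ⊆ A ∧ A.card ≤ D * I.card ∧
      ∀ i ∈ I, ∀ j ∈ I, i ≠ j → ¬ near i j := by
  intro A
  induction A using Finset.strongInduction with
  | _ A ih =>
    rcases A.eq_empty_or_nonempty with rfl | ⟨a, ha⟩
    · exact ⟨∅, by simp⟩
    · set B := A.filter (fun j => near a j) with hB
      have hBsub : B ⊆ A := Finset.filter_subset _ _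
      have haB : a ∈ B := Finset.mem_filter.2 ⟨ha, hrefl a⟩
      have hAB : A \ B ⊂ A := Finset.sdiff_ssubset (by simpa using hBsub) ⟨a, haB⟩
      obtain ⟨I', hI'sub, hI'card, hI'pair⟩ := ih _ hAB
      have haI' : a ∉ I' := fun h => (Finset.mem_sdiff.1 (hI'sub h)).2 haB
      have hnotB : ∀ x ∈ I', ¬ near a x := by
        intro x hx hnear
        exact (Finset.mem_sdiff.1 (hI'sub hx)).2
          (Finset.mem_filter.2 ⟨(Finset.mem_sdiff.1 (hI'sub hx)).1, hnear⟩)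
      refine ⟨insert a I', ?_, ?_, ?_⟩
      · intro x hx
        rcases Finset.mem_insert.1 hx with rfl | hx
        · exact ha
        · exact (Finset.mem_sdiff.1 (hI'sub hx)).1
      · have hBcard : B.card ≤ D := by
          refine le_trans (Finset.card_le_card ?_) (hD a)
          intro x hx
          exact Finset.mem_filter.2 ⟨Finset.mem_univ _, (Finset.mem_filter.1 hx).2⟩
        have h2 : A.card ≤ (A \ B).card + B.card := by
          rw [Finset.card_sdiff_add_card]
          exact Finset.card_le_card Finset.subset_union_left
        rw [Finset.card_insert_of_notMem haI', Nat.mul_add, Nat.mul_one]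
        omega
      · intro i hi j hj hij
        rcases Finset.mem_insert.1 hi with hia | hi'
        · exact hia ▸ hnotB j ((Finset.mem_insert.1 hj).resolve_left fun h => hij (hia.trans h.symm))
        · rcases Finset.mem_insert.1 hj with hja | hj'
          · exact fun h => hnotB i hi' (hsym _ _ (hja ▸ h))
          · exact hI'pair i hi' j hj' hij

theorem stmt19 (d m α D : ℕ) (r σ : ℝ) (hr : 0 < r) (hσ : 1 ≤ σ)
    (P : Finset (EuclideanSpace ℝ (Fin d)))
    (c : Fin m → EuclideanSpace ℝ (Fin d))
    (S : Fin m → Finset (EuclideanSpace ℝ (Fin d)))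
    (hsub : ∀ i, S i ⊆ P)
    (hdisj : ∀ i j, i ≠ j → Disjoint (S i) (S j))
    (hsize : ∀ i, α ≤ (S i).card)
    (hball : ∀ i, ∀ p ∈ S i, dist p (c i) ≤ 8*r)
    (hD : ∀ i : Fin m,
      (Finset.univ.filter (fun j : Fin m => dist (c i) (c j) ≤ (8+2*σ)*(8*r))).card ≤ D) :
    ∃ I : Finset (Fin m), (m : ℝ) / D ≤ I.card ∧
      ∀ i ∈ I, ∀ j ∈ I, i ≠ j → ∀ p ∈ S i, ∀ q ∈ S j, ∀ l ∈ I,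
        σ * Metric.diam (↑(S l) : Set (EuclideanSpace ℝ (Fin d))) ≤ dist p q := by
  have hσ0 : (0:ℝ) < σ := lt_of_lt_of_le one_pos hσ
  have hthr : (0:ℝ) ≤ (8+2*σ)*(8*r) := by positivity
  obtain ⟨I, hIsub, hIcard, hIpair⟩ := greedy_select
    (fun i j => dist (c i) (c j) ≤ (8+2*σ)*(8*r))
    (fun i j h => by simpa [dist_comm] using h) (fun i => by simpa using hthr) hD Finset.univ
  refine ⟨I, ?_, ?_⟩
  · rcases Nat.eq_zero_or_pos D with rfl | hDpos
    · simp only [Nat.mul_zero, Nat.zero_mul, Nat.le_zero, Finset.card_univ,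
        Fintype.card_fin] at hIcard
      simp [hIcard]
    · rw [div_le_iff₀ (by exact_mod_cast hDpos)]
      have h3 := hIcard
      rw [Finset.card_univ, Fintype.card_fin] at h3
      calc (m:ℝ) ≤ D * I.card := by exact_mod_cast h3
        _ = I.card * D := mul_comm _ _
  · intro i hi j hj hij p hp q hq l hl
    have hdiam : Metric.diam (↑(S l) : Set (EuclideanSpace ℝ (Fin d))) ≤ 16*r := by
      apply Metric.diam_le_of_forall_dist_le (by linarith)
      intro x hx y hy
      calc dist x y ≤ dist x (c l) + dist y (c l) := dist_triangle_right _ _ _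
        _ ≤ 8*r + 8*r := add_le_add (hball l x hx) (hball l y hy)
        _ = 16*r := by ring
    have hfar : (8+2*σ)*(8*r) < dist (c i) (c j) :=
      lt_of_not_ge (hIpair i hi j hj hij)
    have h1 : dist (c i) (c j) ≤ dist p (c i) + dist p q + dist q (c j) := by
      calc dist (c i) (c j) ≤ dist (c i) p + dist p (c j) := dist_triangle _ _ _
        _ ≤ dist (c i) p + (dist p q + dist q (c j)) :=
          add_le_add_right (dist_triangle _ _ _) _
        _ = dist p (c i) + dist p q + dist q (c j) := by rw [dist_comm (c i) p]; ring
    have hpq : 16*σ*r ≤ dist p q := by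
      have hpi := hball i p hp
      have hqj := hball j q hq
      nlinarith
    calc σ * Metric.diam (↑(S l) : Set (EuclideanSpace ℝ (Fin d)))
        ≤ σ * (16*r) := by nlinarith
      _ = 16*σ*r := by ring
      _ ≤ dist p q := hpq
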